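/- For every nonzero real number a and every (x,y) ∈ ℝ², the map L̃ of Theorem 7.1 satisfies Im b(∂L̃/∂x, ∂L̃/∂y) = 0, i.e. ⟨i·∂L̃/∂x, ∂L̃/∂y⟩ = 0. Combined with horizontality, this expresses that the projected surface π∘L̃ in CH²₁(−4) is Lagrangian. -/

import Mathlib

open Complex

/-- The index-two Hermitian form
`b(z,w) = −conj z₁ · w₁ − conj z₂ · w₂ + conj z₃ · w₃` on `ℂ³`, over which the
pseudo-hyperbolic space `H⁵₂(−1) = {z : b(z,z) = −1}` and the Hopf fibration
`π : H⁵₂(−1) → CH²₁(−4)` are defined. -/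
noncomputable def bHyp (z w : ℂ × ℂ × ℂ) : ℂ :=
  -(starRingEnd ℂ z.1) * w.1 - (starRingEnd ℂ z.2.1) * w.2.1
    + (starRingEnd ℂ z.2.2) * w.2.2

/-- The horizontal lift `L̃ : ℝ² → ℂ³` of Theorem 7.1. -/
noncomputable def Lch (a x y : ℝ) : ℂ × ℂ × ℂ :=
  ((1 / Real.sqrt 3 : ℝ) : ℂ) •
    (((Real.sqrt 2 : ℝ) : ℂ) * Complex.exp (-(Complex.I * ((x + a ^ 2 * y : ℝ) : ℂ)) / (2 * (a : ℂ)))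
        * ((Real.cosh (Real.sqrt 3 * (x - a ^ 2 * y) / (2 * a)) : ℝ) : ℂ),
     Complex.exp (Complex.I * ((a * y + x / a : ℝ) : ℂ)),
     ((Real.sqrt 2 : ℝ) : ℂ) * Complex.exp (-(Complex.I * ((x + a ^ 2 * y : ℝ) : ℂ)) / (2 * (a : ℂ)))
        * ((Real.sinh (Real.sqrt 3 * (x - a ^ 2 * y) / (2 * a)) : ℝ) : ℂ))

/-- Theorem 7.1: `Im b(∂L̃/∂x, ∂L̃/∂y) = 0`, i.e. `⟨i·∂L̃/∂x, ∂L̃/∂y⟩ = 0`;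
combined with horizontality this expresses that `π ∘ L̃` is Lagrangian in
`CH²₁(−4)`. -/
theorem Lch_lagrangian (a : ℝ) (ha : a ≠ 0) :
    ∀ x y : ℝ,
      (bHyp (deriv (fun t => Lch a t y) x) (deriv (fun t => Lch a x t) y)).im = 0 := by
  intro x y
  have h1x : HasDerivAt (fun t : ℝ =>
      ((Real.sqrt 2 : ℝ) : ℂ) * Complex.exp (-(Complex.I * ((t + a ^ 2 * y : ℝ) : ℂ)) / (2 * (a : ℂ)))
        * ((Real.cosh (Real.sqrt 3 * (t - a ^ 2 * y) / (2 * a)) : ℝ) : ℂ)) _ x :=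
    HasDerivAt.mul
      (((((((hasDerivAt_id x).add_const (a ^ 2 * y)).ofReal_comp.const_mul Complex.I).neg).div_const
          (2 * (a : ℂ))).cexp).const_mul ((Real.sqrt 2 : ℝ) : ℂ))
      (((((hasDerivAt_id x).sub_const (a ^ 2 * y)).const_mul (Real.sqrt 3)).div_const (2 * a)).cosh.ofReal_comp)
  have h2x : HasDerivAt (fun t : ℝ =>
      Complex.exp (Complex.I * ((a * y + t / a : ℝ) : ℂ))) _ x :=
    (((((hasDerivAt_id x).div_const a).const_add (a * y)).ofReal_comp.const_mul Complex.I).cexp)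
  have h3x : HasDerivAt (fun t : ℝ =>
      ((Real.sqrt 2 : ℝ) : ℂ) * Complex.exp (-(Complex.I * ((t + a ^ 2 * y : ℝ) : ℂ)) / (2 * (a : ℂ)))
        * ((Real.sinh (Real.sqrt 3 * (t - a ^ 2 * y) / (2 * a)) : ℝ) : ℂ)) _ x :=
    HasDerivAt.mul
      (((((((hasDerivAt_id x).add_const (a ^ 2 * y)).ofReal_comp.const_mul Complex.I).neg).div_const
          (2 * (a : ℂ))).cexp).const_mul ((Real.sqrt 2 : ℝ) : ℂ))
      (((((hasDerivAt_id x).sub_const (a ^ 2 * y)).const_mul (Real.sqrt 3)).div_const (2 * a)).sinh.ofReal_comp)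
  have hx : HasDerivAt (fun t => Lch a t y) _ x :=
    ((h1x.prodMk (h2x.prodMk h3x)).const_smul (((1 / Real.sqrt 3 : ℝ) : ℂ)))
  have h1y : HasDerivAt (fun t : ℝ =>
      ((Real.sqrt 2 : ℝ) : ℂ) * Complex.exp (-(Complex.I * ((x + a ^ 2 * t : ℝ) : ℂ)) / (2 * (a : ℂ)))
        * ((Real.cosh (Real.sqrt 3 * (x - a ^ 2 * t) / (2 * a)) : ℝ) : ℂ)) _ y :=
    HasDerivAt.mul
      ((((((((hasDerivAt_id y).const_mul (a ^ 2)).const_add x).ofReal_comp.const_mul Complex.I).neg).div_const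
          (2 * (a : ℂ))).cexp).const_mul ((Real.sqrt 2 : ℝ) : ℂ))
      ((((((hasDerivAt_id y).const_mul (a ^ 2)).const_sub x).const_mul (Real.sqrt 3)).div_const (2 * a)).cosh.ofReal_comp)
  have h2y : HasDerivAt (fun t : ℝ =>
      Complex.exp (Complex.I * ((a * t + x / a : ℝ) : ℂ))) _ y :=
    (((((hasDerivAt_id y).const_mul a).add_const (x / a)).ofReal_comp.const_mul Complex.I).cexp)
  have h3y : HasDerivAt (fun t : ℝ =>
      ((Real.sqrt 2 : ℝ) : ℂ) * Complex.exp (-(Complex.I * ((x + a ^ 2 * t : ℝ) : ℂ)) / (2 * (a : ℂ)))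
        * ((Real.sinh (Real.sqrt 3 * (x - a ^ 2 * t) / (2 * a)) : ℝ) : ℂ)) _ y :=
    HasDerivAt.mul
      ((((((((hasDerivAt_id y).const_mul (a ^ 2)).const_add x).ofReal_comp.const_mul Complex.I).neg).div_const
          (2 * (a : ℂ))).cexp).const_mul ((Real.sqrt 2 : ℝ) : ℂ))
      ((((((hasDerivAt_id y).const_mul (a ^ 2)).const_sub x).const_mul (Real.sqrt 3)).div_const (2 * a)).sinh.ofReal_comp)
  have hy : HasDerivAt (fun t => Lch a x t) _ y :=
    ((h1y.prodMk (h2y.prodMk h3y)).const_smul (((1 / Real.sqrt 3 : ℝ) : ℂ)))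
  rw [hx.deriv, hy.deriv]
  rw [← Complex.conj_eq_iff_im]
  simp only [bHyp, Prod.smul_fst, Prod.smul_snd, smul_eq_mul, map_mul, map_add, map_sub, map_neg,
    map_div₀, map_ofNat, map_one, Complex.conj_conj, Complex.conj_I, Complex.conj_ofReal,
    ← Complex.exp_conj, neg_mul, neg_neg, mul_one, id_eq, Pi.neg_apply]
  push_cast
  ring
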